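/- Let p ∈ (0,1] and d ∈ ℕ with d ≥ 1. Among all tuples (P₁,…,P_d) ∈ [0,1]^d with fixed sum Q = Σᵢ Pᵢ, the product ∏ᵢ (1 − p·Pᵢ) is minimized by the extremal allocation that sets ⌊Q⌋ of the Pᵢ equal to 1, one equal to Q − ⌊Q⌋, and the rest to 0; i.e., for all such tuples, ∏ᵢ (1 − p·Pᵢ) ≥ (1−p)^⌊Q⌋ · (1 − p·(Q − ⌊Q⌋)). -/
import Mathlib

noncomputable def gfun (p Q : ℝ) : ℝ := (1 - p) ^ (⌊Q⌋₊) * (1 - p * (Q - ⌊Q⌋₊))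

lemma gfun_step (p : ℝ) (hp0 : 0 < p) (hp1 : p ≤ 1) (S t : ℝ) (hS : 0 ≤ S)
    (ht0 : 0 ≤ t) (ht1 : t ≤ 1) : gfun p (S + t) ≤ (1 - p * t) * gfun p S := by
  set m : ℕ := ⌊S⌋₊ with hm
  have hmS : (m : ℝ) ≤ S := Nat.floor_le hS
  have hSm : S < m + 1 := Nat.lt_floor_add_one S
  set f : ℝ := S - m with hf
  have hf0 : 0 ≤ f := by simp [hf]; linarith
  have hf1 : f < 1 := by simp [hf]; linarith
  have hpow : (0:ℝ) ≤ (1 - p) ^ m := pow_nonneg (by linarith) m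
  by_cases h : f + t < 1
  · have hfloor : ⌊S + t⌋₊ = m := by
      rw [Nat.floor_eq_iff (by linarith)]
      refine ⟨by linarith, by push_cast; linarith⟩
    rw [gfun, gfun, hfloor, ← hm]
    have key : 1 - p * (S + t - m) ≤ (1 - p * t) * (1 - p * (S - m)) := by
      nlinarith [mul_nonneg (mul_nonneg hp0.le ht0) (mul_nonneg hp0.le (by linarith : (0:ℝ) ≤ S - m))]
    calc (1 - p) ^ m * (1 - p * (S + t - m)) ≤ (1 - p) ^ m * ((1 - p * t) * (1 - p * (S - m))) :=
          mul_le_mul_of_nonneg_left key hpow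
      _ = (1 - p * t) * ((1 - p) ^ m * (1 - p * (S - m))) := by ring
  · push_neg at h
    have hfloor : ⌊S + t⌋₊ = m + 1 := by
      rw [Nat.floor_eq_iff (by linarith)]
      constructor <;> push_cast <;> linarith
    rw [gfun, gfun, hfloor, ← hm]
    have key : (1 - p) * (1 - p * (S + t - (m + 1))) ≤ (1 - p * t) * (1 - p * (S - m)) := by
      nlinarith [mul_nonneg (mul_nonneg (mul_nonneg hp0.le hp0.le) (by linarith : (0:ℝ) ≤ 1 - (S - m))) (by linarith : (0:ℝ) ≤ 1 - t)]
    push_cast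
    calc (1 - p) ^ (m + 1) * (1 - p * (S + t - (m + 1)))
        = (1 - p) ^ m * ((1 - p) * (1 - p * (S + t - (m + 1)))) := by ring
      _ ≤ (1 - p) ^ m * ((1 - p * t) * (1 - p * (S - m))) := mul_le_mul_of_nonneg_left key hpow
      _ = (1 - p * t) * ((1 - p) ^ m * (1 - p * (S - m))) := by ring

lemma gfun_main (p : ℝ) (hp0 : 0 < p) (hp1 : p ≤ 1) :
    ∀ n (P : Fin n → ℝ), (∀ i, 0 ≤ P i ∧ P i ≤ 1) →
      gfun p (∑ i, P i) ≤ ∏ i, (1 - p * P i) := by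
  intro n
  induction n with
  | zero => intro P hP; simp [gfun]
  | succ n ih =>
    intro P hP
    rw [Fin.sum_univ_castSucc, Fin.prod_univ_castSucc]
    have hS : 0 ≤ ∑ i : Fin n, P i.castSucc :=
      Finset.sum_nonneg fun i _ => (hP _).1
    have h1 := ih (fun i => P i.castSucc) (fun i => hP _)
    have h2 := gfun_step p hp0 hp1 (∑ i : Fin n, P i.castSucc) (P (Fin.last n)) hS
      (hP _).1 (hP _).2
    have h3 : 0 ≤ 1 - p * P (Fin.last n) := by
      nlinarith [(hP (Fin.last n)).1, (hP (Fin.last n)).2]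
    calc gfun p (∑ i : Fin n, P i.castSucc + P (Fin.last n))
        ≤ (1 - p * P (Fin.last n)) * gfun p (∑ i : Fin n, P i.castSucc) := h2
      _ ≤ (1 - p * P (Fin.last n)) * ∏ i : Fin n, (1 - p * P i.castSucc) :=
          mul_le_mul_of_nonneg_left h1 h3
      _ = (∏ i : Fin n, (1 - p * P i.castSucc)) * (1 - p * P (Fin.last n)) := mul_comm _ _

theorem stmt_0 (p : ℝ) (hp0 : 0 < p) (hp1 : p ≤ 1) (d : ℕ) (hd : 1 ≤ d)
    (P : Fin d → ℝ) (hP : ∀ i, 0 ≤ P i ∧ P i ≤ 1) (Q : ℝ) (hQ : Q = ∑ i, P i) :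
    (1 - p) ^ (⌊Q⌋₊) * (1 - p * (Q - ⌊Q⌋₊)) ≤ ∏ i, (1 - p * P i) := by
  subst hQ
  exact gfun_main p hp0 hp1 d P hP
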